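/- Let A = ℂ[x^{±1}, y^{±1}][t]/(t³) and define the algebra automorphisms θ₁ : x ↦ x, y ↦ y(1+tx)² and θ₂ : x ↦ x(1+ty)^{−2}, y ↦ y of A. Then the commutator θ₁^{−1} ∘ θ₂^{−1} ∘ θ₁ ∘ θ₂ is the identity modulo t², and modulo t³ it equals the automorphism x ↦ x(1 − t²xy)^{4}, y ↦ y(1 − t²xy)^{−4}. -/

import Mathlib

set_option maxHeartbeats 1000000
set_option synthInstance.maxHeartbeats 1000000


/-- The Laurent polynomial ring `ℂ[x^{±1}, y^{±1}]` as the group algebra of `ℤ²`. -/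
abbrev L12 : Type := AddMonoidAlgebra ℂ (ℤ × ℤ)

/-- `A = ℂ[x^{±1}, y^{±1}][t]/(t³)`. -/
abbrev A12 : Type := Polynomial L12 ⧸ Ideal.span {(Polynomial.X : Polynomial L12) ^ 3}

/-- The image of `x` in `A`. -/
noncomputable def xA : A12 :=
  Ideal.Quotient.mk _ (Polynomial.C (AddMonoidAlgebra.single ((1 : ℤ), (0 : ℤ)) (1 : ℂ)))

/-- The image of `y` in `A`. -/
noncomputable def yA : A12 :=
  Ideal.Quotient.mk _ (Polynomial.C (AddMonoidAlgebra.single ((0 : ℤ), (1 : ℤ)) (1 : ℂ)))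

/-- The image of `t` in `A`. -/
noncomputable def tA : A12 := Ideal.Quotient.mk _ (Polynomial.X : Polynomial L12)

/-- Monomials `x^m y^n` in `A`, for `(m,n) : ℤ²`. -/
noncomputable def Xm (v : ℤ × ℤ) : A12 :=
  Ideal.Quotient.mk _ (Polynomial.C (AddMonoidAlgebra.single v (1 : ℂ)))

lemma Xm_mul (v w : ℤ × ℤ) : Xm v * Xm w = Xm (v + w) := by
  unfold Xm
  rw [← map_mul, ← map_mul, AddMonoidAlgebra.single_mul_single, one_mul]

lemma Xm_zero : Xm 0 = 1 := by
  unfold Xm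
  rw [← AddMonoidAlgebra.one_def, map_one, map_one]

lemma xA_eq : xA = Xm (1, 0) := rfl
lemma yA_eq : yA = Xm (0, 1) := rfl

lemma L12_induction (p : L12 → Prop) (h0 : p 0)
    (ha : ∀ f g : L12, p f → p g → p (f + g))
    (hs : ∀ (v : ℤ × ℤ) (c : ℂ), p (AddMonoidAlgebra.single v c)) : ∀ a : L12, p a :=
  fun a => AddMonoidAlgebra.induction_linear a h0 (fun f g => ha f g) hs

lemma tA_pow_three : tA ^ 3 = 0 := by
  unfold tA
  rw [← map_pow, Ideal.Quotient.eq_zero_iff_mem]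
  exact Ideal.subset_span (Set.mem_singleton _)

instance A12_isTwoSided (I : Ideal A12) : I.IsTwoSided :=
  ⟨fun {a} b ha => by have h := I.mul_mem_left b ha; rwa [mul_comm b a] at h⟩

lemma mk_C_single (v : ℤ × ℤ) (c : ℂ) :
    Ideal.Quotient.mk (Ideal.span {(Polynomial.X : Polynomial L12) ^ 3})
      (Polynomial.C (AddMonoidAlgebra.single v c))
      = (algebraMap ℂ A12 : ℂ →+* A12) c * Xm v := by
  have h : AddMonoidAlgebra.single v c
      = AddMonoidAlgebra.single (0 : ℤ × ℤ) c * AddMonoidAlgebra.single v (1 : ℂ) := by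
    rw [AddMonoidAlgebra.single_mul_single, zero_add, mul_one]
  rw [h, map_mul, map_mul]
  congr 1

/-- The order-2 scattering computation for pure SU(2): the commutator
`θ₁⁻¹ ∘ θ₂⁻¹ ∘ θ₁ ∘ θ₂` of the automorphisms `θ₁ : x ↦ x, y ↦ y(1+tx)²` and
`θ₂ : x ↦ x(1+ty)⁻², y ↦ y` of `ℂ[x^{±1},y^{±1}][t]/(t³)` is the identity mod `t²`,
and mod `t³` it is `x ↦ x(1-t²xy)⁴, y ↦ y(1-t²xy)⁻⁴` (fixing `t`). -/
theorem su2_scattering_commutator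
    (θ₁ θ₂ : A12 ≃ₐ[ℂ] A12)
    (h1x : θ₁ xA = xA) (h1y : θ₁ yA = yA * (1 + tA * xA) ^ 2) (h1t : θ₁ tA = tA)
    (h2x : θ₂ xA * (1 + tA * yA) ^ 2 = xA) (h2y : θ₂ yA = yA) (h2t : θ₂ tA = tA) :
    (∀ u : A12, θ₁.symm (θ₂.symm (θ₁ (θ₂ u))) - u ∈ Ideal.span {tA ^ 2}) ∧
    θ₁.symm (θ₂.symm (θ₁ (θ₂ xA))) = xA * (1 - tA ^ 2 * xA * yA) ^ 4 ∧
    θ₁.symm (θ₂.symm (θ₁ (θ₂ yA))) * (1 - tA ^ 2 * xA * yA) ^ 4 = yA ∧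
    θ₁.symm (θ₂.symm (θ₁ (θ₂ tA))) = tA := by
  have ht3 : tA ^ 3 = 0 := tA_pow_three
  -- inverse automorphism values on generators
  have s1x : θ₁.symm xA = xA := θ₁.symm_apply_eq.mpr h1x.symm
  have s1t : θ₁.symm tA = tA := θ₁.symm_apply_eq.mpr h1t.symm
  have s2y : θ₂.symm yA = yA := θ₂.symm_apply_eq.mpr h2y.symm
  have s2t : θ₂.symm tA = tA := θ₂.symm_apply_eq.mpr h2t.symm
  have key1 : θ₁ (yA * (1 - tA * xA + tA ^ 2 * xA ^ 2) ^ 2) = yA := by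
    simp only [map_mul, map_add, map_sub, map_pow, map_one, h1x, h1y, h1t]
    linear_combination ((2) * xA ^ 3 * yA + xA ^ 6 * yA * tA ^ 3) * ht3
  have s1y : θ₁.symm yA = yA * (1 - tA * xA + tA ^ 2 * xA ^ 2) ^ 2 :=
    θ₁.symm_apply_eq.mpr key1.symm
  have key2 : θ₂ (xA * (1 + tA * yA) ^ 2) = xA := by
    simp only [map_mul, map_add, map_pow, map_one, h2y, h2t]
    linear_combination h2x
  have s2x : θ₂.symm xA = xA * (1 + tA * yA) ^ 2 := θ₂.symm_apply_eq.mpr key2.symm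
  have e2 : θ₂ xA = xA * (1 - tA * yA + tA ^ 2 * yA ^ 2) ^ 2 := by
    linear_combination (1 - tA * yA + tA ^ 2 * yA ^ 2) ^ 2 * h2x
      - θ₂ xA * ((2) * yA ^ 3 + yA ^ 6 * tA ^ 3) * ht3
  -- the chain for x
  have ex1 : θ₁ (θ₂ xA)
      = xA - 2 * xA * yA * tA + 3 * xA * yA ^ 2 * tA ^ 2 - 4 * xA ^ 2 * yA * tA ^ 2 := by
    rw [e2]
    simp only [map_mul, map_add, map_sub, map_pow, map_one, h1x, h1y, h1t]
    linear_combination (-(2) * xA * yA ^ 3 + xA * yA ^ 4 * tA + (12) * xA ^ 2 * yA ^ 2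
      - (12) * xA ^ 2 * yA ^ 3 * tA + (8) * xA ^ 2 * yA ^ 4 * tA ^ 2
      - (2) * xA ^ 3 * yA + (18) * xA ^ 3 * yA ^ 2 * tA
      - (30) * xA ^ 3 * yA ^ 3 * tA ^ 2 + (28) * xA ^ 3 * yA ^ 4 * tA ^ 3
      + (12) * xA ^ 4 * yA ^ 2 * tA ^ 2 - (40) * xA ^ 4 * yA ^ 3 * tA ^ 3
      + (56) * xA ^ 4 * yA ^ 4 * tA ^ 4 + (3) * xA ^ 5 * yA ^ 2 * tA ^ 3
      - (30) * xA ^ 5 * yA ^ 3 * tA ^ 4 + (70) * xA ^ 5 * yA ^ 4 * tA ^ 5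
      - (12) * xA ^ 6 * yA ^ 3 * tA ^ 5 + (56) * xA ^ 6 * yA ^ 4 * tA ^ 6
      - (2) * xA ^ 7 * yA ^ 3 * tA ^ 6 + (28) * xA ^ 7 * yA ^ 4 * tA ^ 7
      + (8) * xA ^ 8 * yA ^ 4 * tA ^ 8 + xA ^ 9 * yA ^ 4 * tA ^ 9) * ht3
  have ex2 : θ₂.symm (θ₁ (θ₂ xA)) = xA - 4 * xA ^ 2 * yA * tA ^ 2 := by
    rw [ex1]
    simp only [map_mul, map_add, map_sub, map_pow, map_one, map_ofNat, (map_ofNat θ₂.symm 2 : θ₂.symm 2 = 2), (map_ofNat θ₂.symm 3 : θ₂.symm 3 = 3), (map_ofNat θ₂.symm 4 : θ₂.symm 4 = 4), s2x, s2y, s2t]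
    linear_combination ((4) * xA * yA ^ 3 + (3) * xA * yA ^ 4 * tA
      - (16) * xA ^ 2 * yA ^ 2 - (24) * xA ^ 2 * yA ^ 3 * tA
      - (16) * xA ^ 2 * yA ^ 4 * tA ^ 2 - (4) * xA ^ 2 * yA ^ 5 * tA ^ 3) * ht3
  have ex3 : θ₁.symm (θ₂.symm (θ₁ (θ₂ xA))) = xA - 4 * xA ^ 2 * yA * tA ^ 2 := by
    rw [ex2]
    simp only [map_mul, map_add, map_sub, map_pow, map_one, map_ofNat, (map_ofNat θ₁.symm 2 : θ₁.symm 2 = 2), (map_ofNat θ₁.symm 3 : θ₁.symm 3 = 3), (map_ofNat θ₁.symm 4 : θ₁.symm 4 = 4), s1x, s1y, s1t]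
    linear_combination ((8) * xA ^ 3 * yA - (12) * xA ^ 4 * yA * tA
      + (8) * xA ^ 5 * yA * tA ^ 2 - (4) * xA ^ 6 * yA * tA ^ 3) * ht3
  -- the chain for y
  have ey1 : θ₁ (θ₂ yA) = yA + 2 * xA * yA * tA + xA ^ 2 * yA * tA ^ 2 := by
    rw [h2y, h1y]; ring
  have ey2 : θ₂.symm (θ₁ (θ₂ yA))
      = yA + 2 * xA * yA * tA + 4 * xA * yA ^ 2 * tA ^ 2 + xA ^ 2 * yA * tA ^ 2 := by
    rw [ey1]
    simp only [map_mul, map_add, map_pow, map_one, map_ofNat, (map_ofNat θ₂.symm 2 : θ₂.symm 2 = 2), (map_ofNat θ₂.symm 3 : θ₂.symm 3 = 3), (map_ofNat θ₂.symm 4 : θ₂.symm 4 = 4), s2x, s2y, s2t]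
    linear_combination ((2) * xA * yA ^ 3 + (4) * xA ^ 2 * yA ^ 2
      + (6) * xA ^ 2 * yA ^ 3 * tA + (4) * xA ^ 2 * yA ^ 4 * tA ^ 2
      + xA ^ 2 * yA ^ 5 * tA ^ 3) * ht3
  have ey3 : θ₁.symm (θ₂.symm (θ₁ (θ₂ yA))) = yA + 4 * xA * yA ^ 2 * tA ^ 2 := by
    rw [ey2]
    simp only [map_mul, map_add, map_pow, map_one, map_ofNat, (map_ofNat θ₁.symm 2 : θ₁.symm 2 = 2), (map_ofNat θ₁.symm 3 : θ₁.symm 3 = 3), (map_ofNat θ₁.symm 4 : θ₁.symm 4 = 4), s1x, s1y, s1t]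
    linear_combination (-(16) * xA ^ 2 * yA ^ 2 + (2) * xA ^ 3 * yA
      + (40) * xA ^ 3 * yA ^ 2 * tA - (64) * xA ^ 4 * yA ^ 2 * tA ^ 2
      + (76) * xA ^ 5 * yA ^ 2 * tA ^ 3 + xA ^ 6 * yA * tA ^ 3
      - (64) * xA ^ 6 * yA ^ 2 * tA ^ 4 + (40) * xA ^ 7 * yA ^ 2 * tA ^ 5
      - (16) * xA ^ 8 * yA ^ 2 * tA ^ 6 + (4) * xA ^ 9 * yA ^ 2 * tA ^ 7) * ht3
  have et : θ₁.symm (θ₂.symm (θ₁ (θ₂ tA))) = tA := by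
    rw [h2t, h1t, s2t, s1t]
  refine ⟨?_, ?_, ?_, ?_⟩
  · -- identity mod t²
    set Φ : A12 ≃ₐ[ℂ] A12 := (θ₂.trans θ₁).trans (θ₂.symm.trans θ₁.symm) with hΦdef
    have hΦ : ∀ u, Φ u = θ₁.symm (θ₂.symm (θ₁ (θ₂ u))) := fun u => rfl
    set I : Ideal A12 := Ideal.span {tA ^ 2} with hI
    suffices h : ∀ u, Φ u - u ∈ I by intro u; rw [← hΦ u]; exact h u
    have hmul : ∀ a b : A12, Φ a - a ∈ I → Φ b - b ∈ I → Φ (a * b) - a * b ∈ I := by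
      intro a b ha hb
      have : Φ (a * b) - a * b = Φ a * (Φ b - b) + (Φ a - a) * b := by
        rw [map_mul]; ring
      rw [this]
      exact add_mem (I.mul_mem_left _ hb) (I.mul_mem_right _ ha)
    have hadd : ∀ a b : A12, Φ a - a ∈ I → Φ b - b ∈ I → Φ (a + b) - (a + b) ∈ I := by
      intro a b ha hb
      have : Φ (a + b) - (a + b) = (Φ a - a) + (Φ b - b) := by rw [map_add]; ring
      rw [this]; exact add_mem ha hb
    have halg : ∀ c : ℂ, Φ ((algebraMap ℂ A12 : ℂ →+* A12) c)
        - (algebraMap ℂ A12 : ℂ →+* A12) c ∈ I := by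
      intro c; rw [AlgEquiv.commutes, sub_self]; exact zero_mem I
    have hone : Φ 1 - 1 ∈ I := by rw [map_one, sub_self]; exact zero_mem I
    have hinv : ∀ a b : A12, a * b = 1 → Φ a - a ∈ I → Φ b - b ∈ I := by
      intro a b hab ha
      have h1 : Φ a * Φ b = 1 := by rw [← map_mul, hab, map_one]
      have h2 : Φ b - b = Φ b * b * (a - Φ a) := by
        linear_combination (-(Φ b)) * hab + b * h1
      rw [h2]
      have : a - Φ a ∈ I := by
        have := neg_mem ha; rwa [neg_sub] at this
      exact I.mul_mem_left _ this
    have hx : Φ xA - xA ∈ I := by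
      rw [hΦ, ex3, hI]
      refine Ideal.mem_span_singleton.mpr ⟨-(4 * xA ^ 2 * yA), ?_⟩; ring
    have hy : Φ yA - yA ∈ I := by
      rw [hΦ, ey3, hI]
      refine Ideal.mem_span_singleton.mpr ⟨4 * xA * yA ^ 2, ?_⟩; ring
    have ht : Φ tA - tA ∈ I := by rw [hΦ, et, sub_self]; exact zero_mem I
    have hxinv : Φ (Xm (-1, 0)) - Xm (-1, 0) ∈ I := by
      refine hinv xA _ ?_ hx
      rw [xA_eq, Xm_mul]; norm_num; exact Xm_zero
    have hyinv : Φ (Xm (0, -1)) - Xm (0, -1) ∈ I := by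
      refine hinv yA _ ?_ hy
      rw [yA_eq, Xm_mul]; norm_num; exact Xm_zero
    have hXm1 : ∀ m : ℤ, Φ (Xm (m, 0)) - Xm (m, 0) ∈ I := by
      intro m
      induction m using Int.induction_on with
      | zero =>
        rw [show ((0 : ℤ), (0 : ℤ)) = (0 : ℤ × ℤ) from rfl, Xm_zero]; exact hone
      | succ i ih =>
        have : Xm ((i : ℤ) + 1, 0) = Xm ((i : ℤ), 0) * Xm (1, 0) := by
          rw [Xm_mul]; norm_num
        rw [this]; exact hmul _ _ ih (xA_eq ▸ hx)
      | pred i ih =>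
        have : Xm (-(i : ℤ) - 1, 0) = Xm (-(i : ℤ), 0) * Xm (-1, 0) := by
          rw [Xm_mul]; norm_num; ring
        rw [this]; exact hmul _ _ ih hxinv
    have hXm2 : ∀ n : ℤ, Φ (Xm (0, n)) - Xm (0, n) ∈ I := by
      intro n
      induction n using Int.induction_on with
      | zero =>
        rw [show ((0 : ℤ), (0 : ℤ)) = (0 : ℤ × ℤ) from rfl, Xm_zero]; exact hone
      | succ i ih =>
        have : Xm (0, (i : ℤ) + 1) = Xm (0, (i : ℤ)) * Xm (0, 1) := by
          rw [Xm_mul]; norm_num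
        rw [this]; exact hmul _ _ ih (yA_eq ▸ hy)
      | pred i ih =>
        have : Xm (0, -(i : ℤ) - 1) = Xm (0, -(i : ℤ)) * Xm (0, -1) := by
          rw [Xm_mul]; norm_num; ring
        rw [this]; exact hmul _ _ ih hyinv
    have hXm : ∀ v : ℤ × ℤ, Φ (Xm v) - Xm v ∈ I := by
      rintro ⟨m, n⟩
      have : Xm (m, n) = Xm (m, 0) * Xm (0, n) := by rw [Xm_mul]; norm_num
      rw [this]; exact hmul _ _ (hXm1 m) (hXm2 n)
    -- constants from L12
    have hC : ∀ a : L12,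
        Φ (Ideal.Quotient.mk _ (Polynomial.C a))
          - Ideal.Quotient.mk _ (Polynomial.C a) ∈ I := by
      refine L12_induction _ ?_ ?_ ?_
      · simp only [map_zero, sub_zero]; exact zero_mem I
      · intro f g hf hg
        rw [map_add, map_add]
        exact hadd _ _ hf hg
      · intro v c
        rw [mk_C_single]
        exact hmul _ _ (halg c) (hXm v)
    -- all elements
    intro u
    obtain ⟨p, rfl⟩ := Ideal.Quotient.mk_surjective u
    induction p using Polynomial.induction_on with
    | C a => exact hC a
    | add p q hp hq => rw [map_add]; exact hadd _ _ hp hq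
    | monomial n a ih =>
      have : (Ideal.Quotient.mk (Ideal.span {(Polynomial.X : Polynomial L12) ^ 3}))
          (Polynomial.C a * Polynomial.X ^ (n + 1))
          = (Ideal.Quotient.mk _) (Polynomial.C a * Polynomial.X ^ n) * tA := by
        show _ = _ * Ideal.Quotient.mk _ (Polynomial.X : Polynomial L12)
        rw [← map_mul]
        congr 1
        ring
      rw [this]; exact hmul _ _ ih ht
  · rw [ex3]
    linear_combination (-(6) * xA ^ 3 * yA ^ 2 * tA + (4) * xA ^ 4 * yA ^ 3 * tA ^ 3
      - xA ^ 5 * yA ^ 4 * tA ^ 5) * ht3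
  · rw [ey3]
    linear_combination (-(10) * xA ^ 2 * yA ^ 3 * tA + (20) * xA ^ 3 * yA ^ 4 * tA ^ 3
      - (15) * xA ^ 4 * yA ^ 5 * tA ^ 5 + (4) * xA ^ 5 * yA ^ 6 * tA ^ 7) * ht3
  · exact et
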